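/- Let k be a field and let f ∈ k[[x,y,z]] be a nonzero formal power series such that in_{(9,6,4)}f = x² + y³. Then ord_{(15,10,6)}f = 30 and in_{(15,10,6)}f = x² + y³ + a·z⁵ for some a ∈ k. -/

import Mathlib

open MvPowerSeries

/-- The order of a multivariate power series `f` with respect to the weight vector `w`:
the minimum of `w · m` over the support of `f` (and `0` for `f = 0`, by `sInf ∅ = 0`). -/
noncomputable def wOrd {k : Type*} [Field k] (w : Fin 3 → ℕ)
    (f : MvPowerSeries (Fin 3) k) : ℕ :=
  sInf {n | ∃ m : Fin 3 →₀ ℕ, MvPowerSeries.coeff m f ≠ 0 ∧ ∑ i, w i * m i = n}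

/-- The initial term of `f` with respect to the weight vector `w`: the sum of the terms
of `f` whose exponent `m` satisfies `w · m = wOrd w f`. -/
noncomputable def wIn {k : Type*} [Field k] (w : Fin 3 → ℕ)
    (f : MvPowerSeries (Fin 3) k) : MvPowerSeries (Fin 3) k :=
  fun m => if (∑ i, w i * m i) = wOrd w f then MvPowerSeries.coeff m f else 0

lemma wOrd_le {k : Type*} [Field k] (w : Fin 3 → ℕ) (f : MvPowerSeries (Fin 3) k)
    (m : Fin 3 →₀ ℕ) (hm : MvPowerSeries.coeff m f ≠ 0) :
    wOrd w f ≤ ∑ i, w i * m i :=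
  Nat.sInf_le ⟨m, hm, rfl⟩

lemma coeff_eq_zero_of_lt {k : Type*} [Field k] (w : Fin 3 → ℕ) (f : MvPowerSeries (Fin 3) k)
    (m : Fin 3 →₀ ℕ) (hm : ∑ i, w i * m i < wOrd w f) :
    MvPowerSeries.coeff m f = 0 := by
  by_contra hne
  exact absurd (wOrd_le w f m hne) (not_le.mpr hm)

lemma fin3_ext (m n : Fin 3 →₀ ℕ) (h0 : m 0 = n 0) (h1 : m 1 = n 1) (h2 : m 2 = n 2) :
    m = n := by
  ext i; fin_cases i <;> assumption

lemma sum3 (w : Fin 3 → ℕ) (m : Fin 3 →₀ ℕ) :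
    ∑ i, w i * m i = w 0 * m 0 + w 1 * m 1 + w 2 * m 2 := by
  rw [Fin.sum_univ_three]

theorem stmt_15 {k : Type*} [Field k] (f : MvPowerSeries (Fin 3) k) (hf : f ≠ 0)
    (h : wIn ![9,6,4] f = X 0 ^ 2 + X 1 ^ 3) :
    wOrd ![15,10,6] f = 30 ∧
      ∃ a : k, wIn ![15,10,6] f = X 0 ^ 2 + X 1 ^ 3 + C (σ := Fin 3) (R := k) a * X 2 ^ 5 := by
  -- inequalities between the named singles
  have ne01 : (Finsupp.single 0 2 : Fin 3 →₀ ℕ) ≠ Finsupp.single 1 3 := by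
    intro heq; have := DFunLike.congr_fun heq 0; simp [Finsupp.single_apply] at this
  have ne02 : (Finsupp.single 0 2 : Fin 3 →₀ ℕ) ≠ Finsupp.single 2 5 := by
    intro heq; have := DFunLike.congr_fun heq 0; simp [Finsupp.single_apply] at this
  have ne12 : (Finsupp.single 1 3 : Fin 3 →₀ ℕ) ≠ Finsupp.single 2 5 := by
    intro heq; have := DFunLike.congr_fun heq 1; simp [Finsupp.single_apply] at this
  have hc : ∀ m : Fin 3 →₀ ℕ,
      (if (∑ i, ![9,6,4] i * m i) = wOrd ![9,6,4] f
        then MvPowerSeries.coeff m f else 0)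
      = (if m = Finsupp.single 0 2 then (1:k) else 0)
        + (if m = Finsupp.single 1 3 then (1:k) else 0) := by
    intro m
    have h1 : wIn ![9,6,4] f m = (X 0 ^ 2 + X 1 ^ 3 : MvPowerSeries (Fin 3) k) m :=
      congrFun h m
    have h2 : (X 0 ^ 2 + X 1 ^ 3 : MvPowerSeries (Fin 3) k) m
        = MvPowerSeries.coeff m (X 0 ^ 2 + X 1 ^ 3) := rfl
    rw [h2, map_add, MvPowerSeries.coeff_X_pow, MvPowerSeries.coeff_X_pow] at h1
    exact h1
  -- order with respect to (9,6,4) is 18, and some key coefficients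
  have h200 : MvPowerSeries.coeff (Finsupp.single 0 2) f = 1 ∧ wOrd ![9,6,4] f = 18 := by
    have hcc := hc (Finsupp.single 0 2)
    rw [if_pos rfl, if_neg ne01] at hcc
    have hs : (∑ i, ![9,6,4] i * (Finsupp.single 0 2 : Fin 3 →₀ ℕ) i) = 18 := by
      rw [sum3]; simp [Finsupp.single_apply]
    rw [hs, add_zero] at hcc
    by_cases hw : 18 = wOrd ![9,6,4] f
    · rw [if_pos hw] at hcc
      exact ⟨hcc, hw.symm⟩
    · rw [if_neg hw] at hcc
      exact absurd hcc.symm one_ne_zero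
  obtain ⟨h200, hw18⟩ := h200
  have h030 : MvPowerSeries.coeff (Finsupp.single 1 3) f = 1 := by
    have hcc := hc (Finsupp.single 1 3)
    rw [if_neg (Ne.symm ne01), if_pos rfl, zero_add] at hcc
    have hs : (∑ i, ![9,6,4] i * (Finsupp.single 1 3 : Fin 3 →₀ ℕ) i) = 18 := by
      rw [sum3]; simp [Finsupp.single_apply]
    rw [hs, hw18, if_pos rfl] at hcc
    exact hcc
  have h013 : MvPowerSeries.coeff (Finsupp.single 1 1 + Finsupp.single 2 3) f = 0 := by
    have hcc := hc (Finsupp.single 1 1 + Finsupp.single 2 3)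
    have hne1 : (Finsupp.single 1 1 + Finsupp.single 2 3 : Fin 3 →₀ ℕ) ≠ Finsupp.single 0 2 := by
      intro heq; have := DFunLike.congr_fun heq 1; simp [Finsupp.single_apply] at this
    have hne2 : (Finsupp.single 1 1 + Finsupp.single 2 3 : Fin 3 →₀ ℕ) ≠ Finsupp.single 1 3 := by
      intro heq; have := DFunLike.congr_fun heq 2; simp [Finsupp.single_apply] at this
    rw [if_neg hne1, if_neg hne2, add_zero] at hcc
    have hs : (∑ i, ![9,6,4] i * (Finsupp.single 1 1 + Finsupp.single 2 3 : Fin 3 →₀ ℕ) i)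
        = 18 := by
      rw [sum3]; simp [Finsupp.single_apply]
    rw [hs, hw18, if_pos rfl] at hcc
    exact hcc
  -- the key vanishing: if 15a+10b+6c < 30 then coeff is 0
  have hlow : ∀ m : Fin 3 →₀ ℕ, 15 * m 0 + 10 * m 1 + 6 * m 2 < 30 →
      MvPowerSeries.coeff m f = 0 := by
    intro m hm
    rcases lt_or_ge (9 * m 0 + 6 * m 1 + 4 * m 2) 18 with hlt | hge
    · apply coeff_eq_zero_of_lt ![9,6,4] f m
      rw [hw18, sum3]
      simpa using hlt
    · -- then necessarily m = (0,1,3)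
      have hm0 : m 0 = 0 ∧ m 1 = 1 ∧ m 2 = 3 := by
        obtain ⟨a, ha⟩ : ∃ a, m 0 = a := ⟨_, rfl⟩
        obtain ⟨b, hb⟩ : ∃ b, m 1 = b := ⟨_, rfl⟩
        obtain ⟨c, hcc⟩ : ∃ c, m 2 = c := ⟨_, rfl⟩
        rw [ha, hb, hcc] at hm hge ⊢
        have ha' : a ≤ 1 := by omega
        have hb' : b ≤ 2 := by omega
        have hc' : c ≤ 4 := by omega
        interval_cases a <;> interval_cases b <;> interval_cases c <;> omega
      have : m = Finsupp.single 1 1 + Finsupp.single 2 3 := by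
        apply fin3_ext <;> simp [Finsupp.single_apply, hm0.1, hm0.2.1, hm0.2.2]
      rw [this]; exact h013
  have hs200 : (∑ i, ![15,10,6] i * (Finsupp.single 0 2 : Fin 3 →₀ ℕ) i) = 30 := by
    rw [sum3]; simp [Finsupp.single_apply]
  have hord : wOrd ![15,10,6] f = 30 := by
    have hle : wOrd ![15,10,6] f ≤ 30 := by
      have := wOrd_le ![15,10,6] f (Finsupp.single 0 2) (by rw [h200]; exact one_ne_zero)
      rwa [hs200] at this
    rcases eq_or_lt_of_le hle with heq | hlt
    · exact heq
    · exfalso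
      have hne : {n | ∃ m : Fin 3 →₀ ℕ,
          MvPowerSeries.coeff m f ≠ 0 ∧ ∑ i, ![15,10,6] i * m i = n}.Nonempty :=
        ⟨30, Finsupp.single 0 2, by rw [h200]; exact one_ne_zero, hs200⟩
      obtain ⟨m, hm, hs⟩ := Nat.sInf_mem hne
      have hlt' : ∑ i, ![15,10,6] i * m i < 30 := by
        rw [hs]; exact hlt
      rw [sum3] at hlt'
      exact hm (hlow m (by simpa using hlt'))
  refine ⟨hord, MvPowerSeries.coeff (Finsupp.single 2 5) f, ?_⟩
  funext m
  have hRHS : (X 0 ^ 2 + X 1 ^ 3 + C (σ := Fin 3) (R := k) (MvPowerSeries.coeff (Finsupp.single 2 5) f)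
      * X 2 ^ 5 : MvPowerSeries (Fin 3) k) m
      = (if m = Finsupp.single 0 2 then (1:k) else 0)
        + (if m = Finsupp.single 1 3 then (1:k) else 0)
        + (if m = Finsupp.single 2 5 then MvPowerSeries.coeff (Finsupp.single 2 5) f
            else 0) := by
    have h2 : (X 0 ^ 2 + X 1 ^ 3 + C (σ := Fin 3) (R := k) (MvPowerSeries.coeff (Finsupp.single 2 5) f)
        * X 2 ^ 5 : MvPowerSeries (Fin 3) k) m
        = MvPowerSeries.coeff m (X 0 ^ 2 + X 1 ^ 3
          + C (σ := Fin 3) (R := k) (MvPowerSeries.coeff (Finsupp.single 2 5) f) * X 2 ^ 5) := rfl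
    rw [h2, map_add, map_add, MvPowerSeries.coeff_X_pow, MvPowerSeries.coeff_X_pow,
      MvPowerSeries.X_pow_eq, MvPowerSeries.coeff_C_mul, MvPowerSeries.coeff_monomial]
    by_cases hm : m = Finsupp.single 2 5 <;> simp [hm]
  rw [hRHS]
  show (if (∑ i, ![15,10,6] i * m i) = wOrd ![15,10,6] f then MvPowerSeries.coeff m f else 0)
    = _
  rw [sum3, hord]
  simp only [Matrix.cons_val_zero, Matrix.cons_val_one, Matrix.head_cons, Matrix.cons_val_two,
    Matrix.tail_cons]
  by_cases hm : 15 * m 0 + 10 * m 1 + 6 * m 2 = 30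
  · rw [if_pos hm]
    -- solutions: (2,0,0), (0,3,0), (0,0,5)
    have hcases : (m 0 = 2 ∧ m 1 = 0 ∧ m 2 = 0) ∨ (m 0 = 0 ∧ m 1 = 3 ∧ m 2 = 0)
        ∨ (m 0 = 0 ∧ m 1 = 0 ∧ m 2 = 5) := by
      obtain ⟨a, ha⟩ : ∃ a, m 0 = a := ⟨_, rfl⟩
      obtain ⟨b, hb⟩ : ∃ b, m 1 = b := ⟨_, rfl⟩
      obtain ⟨c, hcc⟩ : ∃ c, m 2 = c := ⟨_, rfl⟩
      rw [ha, hb, hcc] at hm ⊢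
      have ha' : a ≤ 2 := by omega
      have hb' : b ≤ 3 := by omega
      have hc' : c ≤ 5 := by omega
      interval_cases a <;> interval_cases b <;> interval_cases c <;> omega
    rcases hcases with ⟨h0, h1, h2⟩ | ⟨h0, h1, h2⟩ | ⟨h0, h1, h2⟩
    · have hm' : m = Finsupp.single 0 2 := by
        apply fin3_ext <;> simp [Finsupp.single_apply, h0, h1, h2]
      subst hm'
      rw [if_pos rfl, if_neg ne01, if_neg ne02, h200]
      ring
    · have hm' : m = Finsupp.single 1 3 := by
        apply fin3_ext <;> simp [Finsupp.single_apply, h0, h1, h2]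
      subst hm'
      rw [if_neg (Ne.symm ne01), if_pos rfl, if_neg ne12, h030]
      ring
    · have hm' : m = Finsupp.single 2 5 := by
        apply fin3_ext <;> simp [Finsupp.single_apply, h0, h1, h2]
      subst hm'
      rw [if_neg (Ne.symm ne02), if_neg (Ne.symm ne12), if_pos rfl]
      ring
  · rw [if_neg hm]
    have hne1 : m ≠ Finsupp.single 0 2 := by
      intro heq; subst heq; simp [Finsupp.single_apply] at hm
    have hne2 : m ≠ Finsupp.single 1 3 := by
      intro heq; subst heq; simp [Finsupp.single_apply] at hm
    have hne3 : m ≠ Finsupp.single 2 5 := by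
      intro heq; subst heq; simp [Finsupp.single_apply] at hm
    rw [if_neg hne1, if_neg hne2, if_neg hne3]
    ring
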